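/- Let 0 < L ≤ U, let X be a random variable supported in [L,U] with CDF F_X and inverse CDF F_X^{-1}, fix δ ∈ [0,1) and a maximal price v ∈ [L,U]. Then the reward-CVaR at level δ of the one-max-search profit P(X,v) = L·1_{X>v} + X·1_{X≤v} equals L if F_X(v) ≤ δ, and equals (1−δ)⁻¹·[ (1 − F_X(v))·L + ∫₀^{F_X(v)−δ} F_X^{-1}(t) dt ] otherwise. -/

import Mathlib

open MeasureTheory Set

/-- Reward conditional value-at-risk of `f` under measure `μ` at level `δ ∈ [0,1)`:
`CVaR_δ[Y] = sup_t { t - (1-δ)⁻¹ E[max(t - Y, 0)] }`. -/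
noncomputable def rcvar (δ : ℝ) (μ : Measure ℝ) (f : ℝ → ℝ) : ℝ :=
  ⨆ t : ℝ, t - (1 - δ)⁻¹ * ∫ x, max (t - f x) 0 ∂μ

/-- One-max search profit of a random threshold `x` when the maximum price is `v`
and the lower price bound is `L`. -/
noncomputable def omsProfit (L v x : ℝ) : ℝ := if x ≤ v then x else L

/-- `δ`-CVaR competitive ratio of the random-threshold strategy `μ` at maximal price `v`. -/
noncomputable def omsRatio (δ L : ℝ) (μ : Measure ℝ) (v : ℝ) : ℝ :=
  v / rcvar δ μ (fun x => omsProfit L v x)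

/-- `δ`-CVaR competitive ratio of the random-threshold strategy `μ` for one-max search
with price bounds `L ≤ U`. -/
noncomputable def omsCR (δ L U : ℝ) (μ : Measure ℝ) : ℝ :=
  ⨆ v : Icc L U, omsRatio δ L μ (v : ℝ)

/-- CDF of the law `μ`. -/
noncomputable def cdfR (μ : Measure ℝ) (x : ℝ) : ℝ := (μ (Iic x)).toReal

/-- Inverse CDF of a law `μ` supported in `[a,b]`: `F⁻¹(p) = inf {x ∈ [a,b] : F(x) ≥ p}`. -/
noncomputable def invCdf (a b : ℝ) (μ : Measure ℝ) (p : ℝ) : ℝ :=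
  sInf {x | x ∈ Icc a b ∧ p ≤ cdfR μ x}

section Auxiliary

open Filter

variable {L U v : ℝ} {μ : Measure ℝ}

lemma cdfR_mono' (μ : Measure ℝ) [IsFiniteMeasure μ] : Monotone (cdfR μ) := fun _ _ hab =>
  ENNReal.toReal_mono (measure_ne_top _ _) (measure_mono (Iic_subset_Iic.2 hab))

lemma cdfR_nonneg' (μ : Measure ℝ) (x : ℝ) : 0 ≤ cdfR μ x := ENNReal.toReal_nonneg

lemma cdfR_le_one' (μ : Measure ℝ) [IsProbabilityMeasure μ] (x : ℝ) : cdfR μ x ≤ 1 := by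
  have := prob_le_one (μ := μ) (s := Iic x)
  simpa [cdfR] using ENNReal.toReal_mono (by simp) this

lemma cdfR_U' (μ : Measure ℝ) [IsProbabilityMeasure μ] {L U : ℝ}
    (hsupp : μ (Icc L U)ᶜ = 0) : cdfR μ U = 1 := by
  have h1 : μ (Iic U) = 1 := by
    refine le_antisymm prob_le_one ?_
    have h3 : μ (Icc L U) ≤ μ (Iic U) := measure_mono (fun x hx => hx.2)
    have h2 : μ (Icc L U) = 1 := by
      have := measure_add_measure_compl (μ := μ) (s := Icc L U) measurableSet_Icc
      rw [hsupp, add_zero] at this; rw [this]; simp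
    simpa [h2] using h3
  simp [cdfR, h1]

lemma cdfR_zero' (μ : Measure ℝ) [IsProbabilityMeasure μ] {L U : ℝ}
    (hsupp : μ (Icc L U)ᶜ = 0) {x : ℝ} (hx : x < L) : cdfR μ x = 0 := by
  have : μ (Iic x) = 0 := by
    refine measure_mono_null (fun y hy => ?_) hsupp
    simp only [mem_compl_iff, mem_Icc, not_and, not_le] at *
    intro h; exact absurd h (not_le.2 (lt_of_le_of_lt hy hx))
  simp [cdfR, this]

lemma cdfR_right_cont' (μ : Measure ℝ) [IsFiniteMeasure μ] {q c : ℝ}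
    (h : ∀ ε : ℝ, 0 < ε → ∃ x, x ≤ q + ε ∧ c ≤ cdfR μ x) : c ≤ cdfR μ q := by
  have hiter : Tendsto (fun n : ℕ => μ (Iic (q + 1 / (n + 1)))) atTop (nhds (μ (Iic q))) := by
    have h1 : (⋂ n : ℕ, Iic (q + 1 / (n + 1))) = Iic q := by
      ext x
      simp only [mem_iInter, mem_Iic]
      constructor
      · intro hx
        by_contra hqx
        push_neg at hqx
        obtain ⟨n, hn⟩ := exists_nat_one_div_lt (sub_pos.2 hqx)
        have := hx n
        linarith
      · intro hx n
        have : (0:ℝ) < 1 / (n + 1) := by positivity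
        linarith
    have := tendsto_measure_iInter_atTop (μ := μ)
      (s := fun n : ℕ => Iic (q + 1 / (n + 1)))
      (fun n => measurableSet_Iic.nullMeasurableSet)
      (fun m n hmn => Iic_subset_Iic.2 (by
        have : (1:ℝ) / (n + 1) ≤ 1 / (m + 1) := by
          apply one_div_le_one_div_of_le (by positivity)
          exact_mod_cast by exact_mod_cast add_le_add_left (Nat.cast_le.2 hmn) 1
        linarith)) ⟨0, measure_ne_top _ _⟩
    rw [h1] at this; exact this
  have htr : Tendsto (fun n : ℕ => cdfR μ (q + 1 / (n + 1))) atTop (nhds (cdfR μ q)) := by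
    exact (ENNReal.tendsto_toReal (measure_ne_top _ _)).comp hiter
  refine ge_of_tendsto htr (Filter.Eventually.of_forall fun n => ?_)
  have hn : (0:ℝ) < 1 / (n + 1) := by positivity
  obtain ⟨x, hx1, hx2⟩ := h _ hn
  exact hx2.trans (cdfR_mono' μ hx1)

section InvCdf
variable [IsProbabilityMeasure μ]

lemma invS_nonempty (hLU : L ≤ U) (hsupp : μ (Icc L U)ᶜ = 0) {c : ℝ} (hc : c ≤ 1) :
    {x | x ∈ Icc L U ∧ c ≤ cdfR μ x}.Nonempty :=
  ⟨U, ⟨hLU, le_refl U⟩, by rw [cdfR_U' μ hsupp]; exact hc⟩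

lemma invS_bdd {c : ℝ} : BddBelow {x | x ∈ Icc L U ∧ c ≤ cdfR μ x} :=
  ⟨L, fun _ hx => hx.1.1⟩

lemma invCdf_mem (hLU : L ≤ U) (hsupp : μ (Icc L U)ᶜ = 0) {c : ℝ} (hc : c ≤ 1) :
    invCdf L U μ c ∈ Icc L U ∧ c ≤ cdfR μ (invCdf L U μ c) := by
  have hne := invS_nonempty (μ := μ) hLU hsupp hc
  constructor
  · exact ⟨le_csInf hne fun x hx => hx.1.1, csInf_le invS_bdd ⟨⟨hLU, le_refl U⟩, by
      rw [cdfR_U' μ hsupp]; exact hc⟩⟩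
  · refine cdfR_right_cont' μ fun ε hε => ?_
    have : sInf {x | x ∈ Icc L U ∧ c ≤ cdfR μ x} < invCdf L U μ c + ε := by
      simp only [invCdf]; linarith
    obtain ⟨x, hxS, hxlt⟩ := exists_lt_of_csInf_lt hne this
    exact ⟨x, hxlt.le, hxS.2⟩

lemma cdfR_lt_of_lt_invCdf (hLU : L ≤ U) (hsupp : μ (Icc L U)ᶜ = 0)
    {c t : ℝ} (hc : 0 < c) (hc1 : c ≤ 1) (ht : t < invCdf L U μ c) :
    cdfR μ t < c := by
  rcases lt_or_ge t L with h | h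
  · rw [cdfR_zero' μ hsupp h]; exact hc
  · by_contra hcon
    push_neg at hcon
    have htU : t ≤ U := by
      have := (invCdf_mem hLU hsupp hc1).1.2
      linarith
    exact absurd (csInf_le invS_bdd ⟨⟨h, htU⟩, hcon⟩) (not_le.2 ht)

lemma invCdf_le_iff (hLU : L ≤ U) (hsupp : μ (Icc L U)ᶜ = 0)
    {p t : ℝ} (hp : p ≤ 1) (htL : L ≤ t) (htU : t ≤ U) :
    invCdf L U μ p ≤ t ↔ p ≤ cdfR μ t := by
  constructor
  · intro h
    exact ((invCdf_mem hLU hsupp hp).2).trans (cdfR_mono' μ h)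
  · intro h
    exact csInf_le invS_bdd ⟨⟨htL, htU⟩, h⟩

lemma invCdf_monoOn (hLU : L ≤ U) (hsupp : μ (Icc L U)ᶜ = 0) :
    MonotoneOn (invCdf L U μ) (Icc 0 1) :=
  fun _ _ _ hp' hpp' =>
  csInf_le_csInf invS_bdd (invS_nonempty hLU hsupp hp'.2)
    (fun _ hx => ⟨hx.1, hpp'.trans hx.2⟩)

end InvCdf

lemma measurable_omsProfit : Measurable (omsProfit L v) := by
  unfold omsProfit
  exact Measurable.ite measurableSet_Iic measurable_id measurable_const

lemma ae_mem_Icc (hsupp : μ (Icc L U)ᶜ = 0) : ∀ᵐ x ∂μ, x ∈ Icc L U := by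
  rw [MeasureTheory.ae_iff]
  rw [show {a | ¬a ∈ Icc L U} = (Icc L U)ᶜ from rfl]
  exact hsupp

lemma omsP_mem {x : ℝ} (hLv : L ≤ v) (hx : x ∈ Icc L U) :
    omsProfit L v x ∈ Icc L v := by
  unfold omsProfit
  rcases le_or_gt x v with h | h
  · simp [h, hx.1]
  · simp [not_le.2 h, hLv]

lemma omsP_le_set {r : ℝ} (hLr : L ≤ r) (hrv : r ≤ v) :
    {x | omsProfit L v x ≤ r} = Iic r ∪ Ioi v := by
  ext x
  unfold omsProfit
  rcases le_or_gt x v with h | h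
  · simp only [h, if_true, mem_setOf_eq, mem_union, mem_Iic, mem_Ioi]
    constructor
    · intro hx; exact Or.inl hx
    · rintro (hx | hx); exact hx; linarith
  · simp only [not_le.2 h, if_false, mem_setOf_eq, mem_union, mem_Iic, mem_Ioi]
    constructor
    · intro _; exact Or.inr h
    · intro _; exact hLr

lemma meas_omsP_le [IsProbabilityMeasure μ] {r : ℝ} (hLr : L ≤ r) (hrv : r ≤ v) :
    (μ {x | omsProfit L v x ≤ r}).toReal = cdfR μ r + (1 - cdfR μ v) := by
  rw [omsP_le_set hLr hrv]
  have hdisj : Disjoint (Iic r) (Ioi v) := by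
    rw [Set.disjoint_left]
    intro x hx hx'
    simp only [mem_Iic, mem_Ioi] at *
    linarith
  rw [measure_union hdisj measurableSet_Ioi]
  have hv : μ (Ioi v) = 1 - μ (Iic v) := by
    have : Ioi v = (Iic v)ᶜ := by simp
    rw [this, measure_compl measurableSet_Iic (measure_ne_top _ _), measure_univ]
  rw [hv, ENNReal.toReal_add (measure_ne_top _ _) (by
    rw [hv] at *
    exact (tsub_le_self.trans_lt (by simp : (1:ENNReal) < ⊤)).ne)]
  congr 1
  rw [ENNReal.toReal_sub_of_le (prob_le_one) (by simp)]
  simp [cdfR]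

lemma meas_omsP_le_zero (hLU : L ≤ U) (hsupp : μ (Icc L U)ᶜ = 0)
    (hLv : L ≤ v) {r : ℝ} (hr : r < L) : μ {x | omsProfit L v x ≤ r} = 0 := by
  refine measure_mono_null (fun x hx => ?_) hsupp
  simp only [mem_setOf_eq] at hx
  intro hmem
  have := omsP_mem hLv hmem
  simp only [mem_Icc] at this
  linarith

lemma integrable_max_oms [IsProbabilityMeasure μ] (hsupp : μ (Icc L U)ᶜ = 0)
    (hLv : L ≤ v) (t : ℝ) :
    Integrable (fun x => max (t - omsProfit L v x) 0) μ := by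
  refine ⟨((measurable_const.sub measurable_omsProfit).max
    measurable_const).aestronglyMeasurable, ?_⟩
  refine HasFiniteIntegral.of_bounded (C := |t - L|) ?_
  filter_upwards [ae_mem_Icc hsupp] with x hx
  have h := omsP_mem hLv hx
  rw [Real.norm_eq_abs, abs_of_nonneg (le_max_right _ _)]
  rcases le_or_gt (t - omsProfit L v x) 0 with h' | h'
  · rw [max_eq_right h']; positivity
  · rw [max_eq_left h'.le]
    have h1 : omsProfit L v x ≥ L := h.1
    have h2 : t - omsProfit L v x ≤ t - L := by linarith
    exact h2.trans (le_abs_self _)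

lemma integral_max_oms [IsProbabilityMeasure μ] (hsupp : μ (Icc L U)ᶜ = 0)
    {q : ℝ} (hLq : L ≤ q) (hqv : q ≤ v) :
    ∫ x, max (q - omsProfit L v x) 0 ∂μ
      = (q - L) * (1 - cdfR μ v) + ∫ s in L..q, cdfR μ s := by
  have hLv : L ≤ v := hLq.trans hqv
  have key := (integrable_max_oms hsupp hLv q).integral_eq_integral_Ioc_meas_le
    (M := q - L)
    (Filter.Eventually.of_forall fun x => le_max_right _ _)
    (by
      filter_upwards [ae_mem_Icc hsupp] with x hx
      have h := (omsP_mem hLv hx).1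
      exact max_le (by linarith) (by linarith))
  rw [key]
  have hcongr : ∀ t ∈ Ioc (0:ℝ) (q - L),
      (μ {a | t ≤ max (q - omsProfit L v a) 0}).toReal
        = cdfR μ (q - t) + (1 - cdfR μ v) := by
    intro t ht
    have hset : {a | t ≤ max (q - omsProfit L v a) 0}
        = {a | omsProfit L v a ≤ q - t} := by
      ext a
      simp only [mem_setOf_eq, le_max_iff]
      constructor
      · rintro (h | h)
        · linarith
        · linarith [ht.1]
      · intro h; left; linarith
    rw [hset, meas_omsP_le (by linarith [ht.2]) (by linarith [ht.1])]
  simp only [measureReal_def]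
  rw [setIntegral_congr_fun measurableSet_Ioc hcongr]
  rw [← intervalIntegral.integral_of_le (by linarith : (0:ℝ) ≤ q - L)]
  have hF : AntitoneOn (fun t => cdfR μ (q - t)) (uIcc 0 (q - L)) := by
    intro a _ b _ hab
    exact cdfR_mono' μ (by linarith)
  have hI1 : IntervalIntegrable (fun t => cdfR μ (q - t)) volume 0 (q - L) :=
    hF.intervalIntegrable
  rw [intervalIntegral.integral_add hI1 intervalIntegrable_const]
  rw [intervalIntegral.integral_const]
  have hsub : ∫ t in (0:ℝ)..(q - L), cdfR μ (q - t) = ∫ s in L..q, cdfR μ s := by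
    have := intervalIntegral.integral_comp_sub_left (a := (0:ℝ)) (b := q - L)
      (fun s => cdfR μ s) q
    simpa using this
  rw [hsub, smul_eq_mul]
  ring

lemma integral_invCdf [IsProbabilityMeasure μ] (hLU : L ≤ U) (hsupp : μ (Icc L U)ᶜ = 0)
    {c : ℝ} (hc : 0 < c) (hc1 : c ≤ 1) :
    ∫ t in (0:ℝ)..c, invCdf L U μ t
      = c * invCdf L U μ c - ∫ s in L..(invCdf L U μ c), cdfR μ s := by
  set q := invCdf L U μ c with hqdef
  obtain ⟨⟨hLq, hqU⟩, hcq⟩ := invCdf_mem hLU hsupp hc1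
  have hmono : MonotoneOn (invCdf L U μ) (uIcc 0 c) := by
    refine (invCdf_monoOn hLU hsupp).mono ?_
    rw [uIcc_of_le hc.le]
    exact Icc_subset_Icc le_rfl hc1
  have hII : IntervalIntegrable (invCdf L U μ) volume 0 c := hmono.intervalIntegrable
  have hIOn : IntegrableOn (invCdf L U μ) (Ioc 0 c) volume := by
    rw [← intervalIntegrable_iff_integrableOn_Ioc_of_le hc.le]
    exact hII
  set ν := volume.restrict (Ioc 0 c) with hν
  set f : ℝ → ℝ := fun p => invCdf L U μ p - L with hf
  have hfint : Integrable f ν := hIOn.sub (integrableOn_const measure_Ioc_lt_top.ne)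
  have hfnn : 0 ≤ᵐ[ν] f := by
    filter_upwards [ae_restrict_mem measurableSet_Ioc] with p hp
    have := (invCdf_mem hLU hsupp (hp.2.trans hc1)).1.1
    simp only [hf, Pi.zero_apply]
    linarith
  have key := hfint.integral_eq_integral_meas_lt hfnn
  have hlevel : ∀ s : ℝ, 0 < s →
      (ν {p | s < f p}).toReal = c - min (cdfR μ (L + s)) c := by
    intro s hs
    have hseteq : {p | s < f p} ∩ Ioc 0 c = Ioc (min (cdfR μ (L + s)) c) c := by
      ext p
      simp only [mem_inter_iff, mem_setOf_eq, mem_Ioc, hf]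
      constructor
      · rintro ⟨hfp, hp0, hpc⟩
        refine ⟨lt_of_le_of_lt (min_le_left _ _) ?_, hpc⟩
        rcases le_or_gt (L + s) U with hU | hU
        · by_contra hcon
          push_neg at hcon
          have := (invCdf_le_iff hLU hsupp (hpc.trans hc1) (by linarith) hU).2 hcon
          linarith
        · exfalso
          have := (invCdf_mem hLU hsupp (hpc.trans hc1)).1.2
          linarith
      · rintro ⟨hgt, hpc⟩
        have hFlt : cdfR μ (L + s) < c := by
          by_contra hcon
          push_neg at hcon
          rw [min_eq_right hcon] at hgt
          linarith
        rw [min_eq_left hFlt.le] at hgt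
        have hp0 : 0 < p := (cdfR_nonneg' μ _).trans_lt hgt
        refine ⟨?_, hp0, hpc⟩
        have hU : L + s ≤ U := by
          by_contra hcon
          push_neg at hcon
          have : cdfR μ U ≤ cdfR μ (L + s) := cdfR_mono' μ hcon.le
          rw [cdfR_U' μ hsupp] at this
          linarith
        have h2 : ¬ invCdf L U μ p ≤ L + s := by
          rw [invCdf_le_iff hLU hsupp (hpc.trans hc1) (by linarith) hU]
          push_neg
          exact hgt
        push_neg at h2
        linarith
    rw [hν, Measure.restrict_apply' measurableSet_Ioc, hseteq, Real.volume_Ioc,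
      ENNReal.toReal_ofReal (by simp [min_le_right])]
  rw [intervalIntegral.integral_of_le hc.le]
  have hsplit : ∫ p in Ioc 0 c, invCdf L U μ p = (∫ p, f p ∂ν) + L * c := by
    rw [hν]
    have h3 : ∫ p in Ioc 0 c, f p = ∫ p in Ioc 0 c, (invCdf L U μ p - L) := rfl
    rw [h3, integral_sub hIOn (integrableOn_const measure_Ioc_lt_top.ne)]
    simp [Real.volume_Ioc, ENNReal.toReal_ofReal hc.le, max_eq_left hc.le]
    ring
  rw [hsplit, key]
  have hzero : ∀ᵐ s ∂(volume : Measure ℝ), s ∈ Ioi (0:ℝ) \ Ioo 0 (q - L) →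
      (ν {p | s < f p}).toReal = 0 := by
    refine Filter.Eventually.of_forall fun s hs => ?_
    obtain ⟨hs0, hsno⟩ := hs
    have hsge : q - L ≤ s := by
      by_contra hcon
      push_neg at hcon
      exact hsno ⟨hs0, hcon⟩
    have hcle : c ≤ cdfR μ (L + s) := hcq.trans (cdfR_mono' μ (by linarith))
    rw [hlevel s hs0, min_eq_right hcle]
    ring
  simp only [measureReal_def]
  rw [setIntegral_eq_of_subset_of_ae_diff_eq_zero measurableSet_Ioi.nullMeasurableSet
      (Ioo_subset_Ioi_self) hzero]
  have hcongr2 : ∀ s ∈ Ioo (0:ℝ) (q - L),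
      (ν {p | s < f p}).toReal = c - cdfR μ (L + s) := by
    intro s hs
    have hFlt : cdfR μ (L + s) < c :=
      cdfR_lt_of_lt_invCdf hLU hsupp hc hc1 (by rw [← hqdef]; linarith [hs.2])
    rw [hlevel s hs.1, min_eq_left hFlt.le]
  rw [setIntegral_congr_fun measurableSet_Ioo hcongr2]
  rw [← integral_Ioc_eq_integral_Ioo,
    ← intervalIntegral.integral_of_le (by linarith : (0:ℝ) ≤ q - L)]
  have hFII : IntervalIntegrable (fun s => cdfR μ (L + s)) volume 0 (q - L) := by
    refine (MonotoneOn.intervalIntegrable ?_)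
    intro a _ b _ hab
    exact cdfR_mono' μ (by linarith)
  rw [intervalIntegral.integral_sub intervalIntegrable_const hFII,
    intervalIntegral.integral_const]
  have hcomp : ∫ s in (0:ℝ)..(q - L), cdfR μ (L + s) = ∫ s in L..q, cdfR μ s := by
    have := intervalIntegral.integral_comp_add_left (a := (0:ℝ)) (b := q - L)
      (fun s => cdfR μ s) L
    simpa using this
  rw [hcomp, smul_eq_mul]
  ring

lemma rcvar_eq_of_opt {δ : ℝ} {P : ℝ → ℝ} [IsProbabilityMeasure μ] (hδ : δ ∈ Ico (0:ℝ) 1)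
    (hP : Measurable P)
    (hInt : ∀ t : ℝ, Integrable (fun x => max (t - P x) 0) μ)
    {t₀ : ℝ}
    (hge : 1 - δ ≤ (μ {x | P x ≤ t₀}).toReal)
    (hle : (μ {x | P x < t₀}).toReal ≤ 1 - δ) :
    rcvar δ μ P = t₀ - (1 - δ)⁻¹ * ∫ x, max (t₀ - P x) 0 ∂μ := by
  have hδ1 : 0 < 1 - δ := by linarith [hδ.2]
  have hmsle : MeasurableSet {x | P x ≤ t₀} := hP measurableSet_Iic
  have hmslt : MeasurableSet {x | P x < t₀} := hP measurableSet_Iio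
  set g : ℝ → ℝ := fun t => t - (1 - δ)⁻¹ * ∫ x, max (t - P x) 0 ∂μ with hg
  have hmain : ∀ t, g t ≤ g t₀ := by
    intro t
    rcases le_or_gt t₀ t with h | h
    · have hptw : ∀ x, max (t₀ - P x) 0 + ({x | P x ≤ t₀}).indicator (fun _ => t - t₀) x
          ≤ max (t - P x) 0 := by
        intro x
        by_cases hx : P x ≤ t₀
        · rw [indicator_of_mem (by exact hx)]
          have h4 : max (t₀ - P x) 0 = t₀ - P x := max_eq_left (by linarith)
          rw [h4, max_eq_left (by linarith)]
          linarith
        · rw [indicator_of_notMem (by exact hx), add_zero]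
          exact max_le_max (by linarith) le_rfl
      have hint : ∫ x, (max (t₀ - P x) 0 + ({x | P x ≤ t₀}).indicator (fun _ => t - t₀) x) ∂μ
          ≤ ∫ x, max (t - P x) 0 ∂μ := by
        refine integral_mono ?_ (hInt t) hptw
        exact (hInt t₀).add ((integrable_const _).indicator hmsle)
      rw [integral_add (hInt t₀) ((integrable_const _).indicator hmsle),
        integral_indicator_const _ hmsle] at hint
      simp only [smul_eq_mul, measureReal_def] at hint
      have hmono : (1 - δ)⁻¹ * ((μ {x | P x ≤ t₀}).toReal * (t - t₀)) ≥ t - t₀ := by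
        have h1 : (μ {x | P x ≤ t₀}).toReal * (t - t₀) ≥ (1 - δ) * (t - t₀) :=
          mul_le_mul_of_nonneg_right hge (by linarith)
        calc (1 - δ)⁻¹ * ((μ {x | P x ≤ t₀}).toReal * (t - t₀))
            ≥ (1 - δ)⁻¹ * ((1 - δ) * (t - t₀)) := by
              exact mul_le_mul_of_nonneg_left h1 (by positivity)
          _ = t - t₀ := by field_simp
      simp only [hg]
      have h2 : (1 - δ)⁻¹ * ∫ x, max (t₀ - P x) 0 ∂μ
          + (1 - δ)⁻¹ * ((μ {x | P x ≤ t₀}).toReal * (t - t₀))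
          ≤ (1 - δ)⁻¹ * ∫ x, max (t - P x) 0 ∂μ := by
        rw [← mul_add]
        exact mul_le_mul_of_nonneg_left (by linarith) (by positivity)
      linarith
    · have hptw : ∀ x, max (t₀ - P x) 0
          ≤ max (t - P x) 0 + ({x | P x < t₀}).indicator (fun _ => t₀ - t) x := by
        intro x
        by_cases hx : P x < t₀
        · rw [indicator_of_mem (by exact hx)]
          have h1 : t - P x ≤ max (t - P x) 0 := le_max_left _ _
          have h4 : max (t₀ - P x) 0 = t₀ - P x := max_eq_left (by linarith)
          rw [h4]
          linarith
        · push_neg at hx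
          rw [indicator_of_notMem (by simpa using hx), add_zero,
            max_eq_right (by linarith : t₀ - P x ≤ 0)]
          exact le_max_right _ _
      have hint : ∫ x, max (t₀ - P x) 0 ∂μ
          ≤ ∫ x, (max (t - P x) 0 + ({x | P x < t₀}).indicator (fun _ => t₀ - t) x) ∂μ := by
        refine integral_mono (hInt t₀) ?_ hptw
        exact (hInt t).add ((integrable_const _).indicator hmslt)
      rw [integral_add (hInt t) ((integrable_const _).indicator hmslt),
        integral_indicator_const _ hmslt] at hint
      simp only [smul_eq_mul, measureReal_def] at hint
      have hmono : (1 - δ)⁻¹ * ((μ {x | P x < t₀}).toReal * (t₀ - t)) ≤ t₀ - t := by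
        have h1 : (μ {x | P x < t₀}).toReal * (t₀ - t) ≤ (1 - δ) * (t₀ - t) :=
          mul_le_mul_of_nonneg_right hle (by linarith)
        calc (1 - δ)⁻¹ * ((μ {x | P x < t₀}).toReal * (t₀ - t))
            ≤ (1 - δ)⁻¹ * ((1 - δ) * (t₀ - t)) :=
              mul_le_mul_of_nonneg_left h1 (by positivity)
          _ = t₀ - t := by field_simp
      simp only [hg]
      have h2 : (1 - δ)⁻¹ * ∫ x, max (t₀ - P x) 0 ∂μ
          ≤ (1 - δ)⁻¹ * ∫ x, max (t - P x) 0 ∂μ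
            + (1 - δ)⁻¹ * ((μ {x | P x < t₀}).toReal * (t₀ - t)) := by
        rw [← mul_add]
        exact mul_le_mul_of_nonneg_left (by linarith) (by positivity)
      linarith
  have hbdd : BddAbove (Set.range g) := ⟨g t₀, by rintro _ ⟨t, rfl⟩; exact hmain t⟩
  refine le_antisymm (ciSup_le hmain) (le_ciSup hbdd t₀)

end Auxiliary

/-- Lemma: integral representation of the reward-`CVaR_δ` of the one-max-search profit in
terms of the inverse CDF of the threshold distribution. -/
theorem oms_cvar_integral (L U : ℝ) (hL : 0 < L) (hLU : L ≤ U)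
    (μ : Measure ℝ) (hp : IsProbabilityMeasure μ) (hsupp : μ (Icc L U)ᶜ = 0)
    (δ : ℝ) (hδ : δ ∈ Ico (0:ℝ) 1) (v : ℝ) (hv : v ∈ Icc L U) :
    rcvar δ μ (fun x => omsProfit L v x) =
      if cdfR μ v ≤ δ then L
      else (1 - δ)⁻¹ * ((1 - cdfR μ v) * L + ∫ t in (0:ℝ)..(cdfR μ v - δ), invCdf L U μ t) := by
  obtain ⟨hδ0, hδ2⟩ := hδ
  have h1δ : 0 < 1 - δ := by linarith
  obtain ⟨hLv, hvU⟩ := hv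
  have hFv1 : cdfR μ v ≤ 1 := cdfR_le_one' μ v
  have hFv0 : 0 ≤ cdfR μ v := cdfR_nonneg' μ v
  have hiden : (fun x => omsProfit L v x) = omsProfit L v := rfl
  rw [hiden]
  by_cases hcase : cdfR μ v ≤ δ
  · rw [if_pos hcase]
    have h0 : rcvar δ μ (omsProfit L v)
        = L - (1 - δ)⁻¹ * ∫ x, max (L - omsProfit L v x) 0 ∂μ := by
      refine rcvar_eq_of_opt ⟨hδ0, hδ2⟩ measurable_omsProfit
        (integrable_max_oms hsupp hLv) ?_ ?_
      · rw [meas_omsP_le le_rfl hLv]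
        have := cdfR_nonneg' μ L
        linarith
      · have hz : μ {x | omsProfit L v x < L} = 0 := by
          refine measure_mono_null (fun x hx => ?_) hsupp
          simp only [mem_setOf_eq] at hx
          intro hmem
          have := (omsP_mem hLv hmem).1
          linarith
        rw [hz]
        simp
        linarith
    have hzero : ∫ x, max (L - omsProfit L v x) 0 ∂μ = 0 := by
      have hae : (fun x => max (L - omsProfit L v x) 0) =ᵐ[μ] (fun _ => 0) := by
        filter_upwards [ae_mem_Icc hsupp] with x hx
        have := (omsP_mem hLv hx).1
        exact max_eq_right (by linarith)
      rw [integral_congr_ae hae, integral_zero]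
    rw [h0, hzero]
    ring
  · rw [if_neg hcase]
    push_neg at hcase
    have hc0 : 0 < cdfR μ v - δ := by linarith
    have hc1 : cdfR μ v - δ ≤ 1 := by linarith
    set q := invCdf L U μ (cdfR μ v - δ) with hqdef
    obtain ⟨⟨hLq, hqU⟩, hcq⟩ := invCdf_mem hLU hsupp hc1
    have hqv : q ≤ v := (invCdf_le_iff hLU hsupp hc1 hLv hvU).2 (by linarith)
    have h0 : rcvar δ μ (omsProfit L v)
        = q - (1 - δ)⁻¹ * ∫ x, max (q - omsProfit L v x) 0 ∂μ := by
      refine rcvar_eq_of_opt ⟨hδ0, hδ2⟩ measurable_omsProfit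
        (integrable_max_oms hsupp hLv) ?_ ?_
      · rw [meas_omsP_le hLq hqv]
        rw [← hqdef] at hcq
        linarith
      · -- bound on μ {P < q}
        have hbound : ∀ n : ℕ, μ {x | omsProfit L v x ≤ q - 1/(n+1)}
            ≤ ENNReal.ofReal (1 - δ) := by
          intro n
          have hpos : (0:ℝ) < 1/(n+1) := by positivity
          rcases lt_or_ge (q - 1/(n+1)) L with h | h
          · rw [meas_omsP_le_zero hLU hsupp hLv h]; simp
          · have hFlt : cdfR μ (q - 1/(n+1)) < cdfR μ v - δ :=
              cdfR_lt_of_lt_invCdf hLU hsupp hc0 hc1 (by rw [← hqdef]; linarith)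
            have htr := meas_omsP_le (μ := μ) h (by linarith : q - 1/(n+1) ≤ v)
            have hle2 : (μ {x | omsProfit L v x ≤ q - 1/(n+1)}).toReal ≤ 1 - δ := by
              rw [htr]; linarith
            calc μ {x | omsProfit L v x ≤ q - 1/(n+1)}
                = ENNReal.ofReal ((μ {x | omsProfit L v x ≤ q - 1/(n+1)}).toReal) :=
                  (ENNReal.ofReal_toReal (measure_ne_top _ _)).symm
              _ ≤ ENNReal.ofReal (1 - δ) := ENNReal.ofReal_le_ofReal hle2
        have hunion : {x | omsProfit L v x < q}
            = ⋃ n : ℕ, {x | omsProfit L v x ≤ q - 1/(n+1)} := by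
          ext x
          simp only [mem_setOf_eq, mem_iUnion]
          constructor
          · intro h
            obtain ⟨n, hn⟩ := exists_nat_one_div_lt (sub_pos.2 h)
            exact ⟨n, by push_cast at hn ⊢; linarith⟩
          · rintro ⟨n, hn⟩
            have : (0:ℝ) < 1/(n+1) := by positivity
            linarith
        have hdir : Directed (· ⊆ ·) (fun n : ℕ => {x | omsProfit L v x ≤ q - 1/(n+1)}) := by
          refine Monotone.directed_le fun m n hmn x hx => ?_
          simp only [mem_setOf_eq] at hx ⊢
          have h5 : (1:ℝ) / (n + 1) ≤ 1 / (m + 1) := by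
            apply one_div_le_one_div_of_le (by positivity)
            exact_mod_cast by exact_mod_cast add_le_add_left (Nat.cast_le.2 hmn) 1
          linarith
        have hmu : μ {x | omsProfit L v x < q} ≤ ENNReal.ofReal (1 - δ) := by
          rw [hunion, hdir.measure_iUnion]
          exact iSup_le hbound
        calc (μ {x | omsProfit L v x < q}).toReal
            ≤ (ENNReal.ofReal (1 - δ)).toReal := ENNReal.toReal_mono (by simp) hmu
          _ = 1 - δ := ENNReal.toReal_ofReal (by linarith)
    rw [h0, integral_max_oms hsupp hLq hqv,
      integral_invCdf hLU hsupp hc0 hc1, ← hqdef]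
    field_simp
    ring
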